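/- arXiv:1204.4495 — 2 statements merged into one kernel-verified Lean document; each statement's English description precedes it below -/
import Mathlib

section
/- Let X ⊆ B(H) be a unital operator space with injective envelope S ⊆ B(H) (with ι = id_X), and let φ: B(H) → S be a ucp projection onto S fixing X. Define on B(H)/ker φ the product (a + ker φ) ⊙ (b + ker φ) := φ(a)φ(b) + ker φ. Then this product is well defined and the quotient norm satisfies the C*-identity: ‖(a + ker φ)* ⊙ (a + ker φ)‖ = ‖a + ker φ‖² for all a ∈ B(H). -/
set_option synthInstance.maxHeartbeats 1000000
set_option maxHeartbeats 1000000

noncomputable section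

open scoped ComplexOrder

/-- A positive operator on a complex inner-product space:
`⟪v, T v⟫ ≥ 0` for every vector `v`. -/
def IsPosOp {E : Type} [NormedAddCommGroup E] [InnerProductSpace ℂ E]
    (T : E →L[ℂ] E) : Prop := ∀ v : E, 0 ≤ (inner ℂ v (T v) : ℂ)

/-- `B(H)`, the bounded operators on `H`. -/
abbrev BH (H : Type) [NormedAddCommGroup H] [InnerProductSpace ℂ H] : Type := H →L[ℂ] H

section Defs

variable {H K : Type}
variable [NormedAddCommGroup H] [InnerProductSpace ℂ H] [CompleteSpace H]
variable [NormedAddCommGroup K] [InnerProductSpace ℂ K] [CompleteSpace K]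

/-- The amplification of a matrix over `B(H)` to an operator on the Hilbert space
`ℓ²`-direct sum of `n` copies of `H`. -/
def amp {n : ℕ} (A : Matrix (Fin n) (Fin n) (BH H)) :
    (PiLp 2 fun _ : Fin n => H) →L[ℂ] PiLp 2 fun _ : Fin n => H :=
  ∑ i : Fin n, ∑ j : Fin n,
    ((PiLp.continuousLinearEquiv 2 ℂ fun _ : Fin n => H).symm.toContinuousLinearMap).comp
      ((ContinuousLinearMap.pi (Pi.single i (ContinuousLinearMap.id ℂ H))).comp
        ((A i j).comp
          ((ContinuousLinearMap.proj j).comp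
            ((PiLp.continuousLinearEquiv 2 ℂ fun _ : Fin n => H).toContinuousLinearMap))))

/-- The matrix norms defining the (concrete) operator space structure of `B(H)`. -/
def matNorm {n : ℕ} (A : Matrix (Fin n) (Fin n) (BH H)) : ℝ := ‖amp A‖

/-- The quotient matrix (semi)norm modulo a subset `J ⊆ B(H)`:
`‖[x i j] + Mₙ(J)‖ = inf { ‖[x i j + y i j]‖ : y i j ∈ J }`. -/
def qnorm (J : Set (BH H)) {n : ℕ} (A : Matrix (Fin n) (Fin n) (BH H)) : ℝ :=
  ⨅ B : Matrix (Fin n) (Fin n) J, matNorm (A + B.map fun b => (b : BH H))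

/-- The scalar-level quotient (semi)norm modulo a subset `J ⊆ B(H)`. -/
def qnorm1 (J : Set (BH H)) (a : BH H) : ℝ := ⨅ b : J, ‖a + (b : BH H)‖

/-- A self-adjoint subspace. -/
def StarClosed (I : Submodule ℂ (BH H)) : Prop := ∀ a ∈ I, star a ∈ I

/-- A completely contractive map defined on a subspace `X ⊆ B(H)` with values in `B(K)`. -/
def CCmap (X : Submodule ℂ (BH H)) (φ : X →ₗ[ℂ] BH K) : Prop :=
  ∀ (n : ℕ) (A : Matrix (Fin n) (Fin n) X),
    matNorm (A.map fun x => φ x) ≤ matNorm (A.map fun x => (x : BH H))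

/-- A completely isometric map defined on a subspace `X ⊆ B(H)` with values in `B(K)`. -/
def CImap (X : Submodule ℂ (BH H)) (φ : X →ₗ[ℂ] BH K) : Prop :=
  ∀ (n : ℕ) (A : Matrix (Fin n) (Fin n) X),
    matNorm (A.map fun x => φ x) = matNorm (A.map fun x => (x : BH H))

/-- A completely contractive map defined on all of `B(H)`. -/
def CCfull (φ : BH H →ₗ[ℂ] BH K) : Prop :=
  ∀ (n : ℕ) (A : Matrix (Fin n) (Fin n) (BH H)),
    matNorm (A.map fun a => φ a) ≤ matNorm A

/-- A completely positive map defined on all of `B(H)`. -/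
def CPfull (φ : BH H →ₗ[ℂ] BH H) : Prop :=
  ∀ (n : ℕ) (A : Matrix (Fin n) (Fin n) (BH H)),
    IsPosOp (amp A) → IsPosOp (amp (A.map fun a => φ a))

/-- A completely positive map defined on an operator (sub)system `S ⊆ B(H)`. -/
def CPmap (S : Submodule ℂ (BH H)) (φ : S →ₗ[ℂ] BH K) : Prop :=
  ∀ (n : ℕ) (A : Matrix (Fin n) (Fin n) S),
    IsPosOp (amp (A.map fun s => (s : BH H))) → IsPosOp (amp (A.map fun s => φ s))

/-- `J ⊆ B(K)` is boundary for `X` (embedded in `B(K)` via `j`) if the quotient map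
by `J` is completely isometric on (the copy of) `X`. -/
def IsBoundarySet (X : Submodule ℂ (BH H)) (j : X →ₗ[ℂ] BH K) (J : Set (BH K)) : Prop :=
  ∀ (n : ℕ) (A : Matrix (Fin n) (Fin n) X),
    qnorm J (A.map fun x => j x) = matNorm (A.map fun x => (x : BH H))

/-- A boundary subsystem for `X` in `B(H)`: a self-adjoint subspace on which the
quotient map is completely isometric on `X`. -/
def IsBoundary (X I : Submodule ℂ (BH H)) : Prop :=
  StarClosed I ∧ IsBoundarySet X X.subtype (I : Set (BH H))

/-- A maximal boundary subsystem for `X` in `B(H)`. -/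
def IsMaximalBoundary (X I : Submodule ℂ (BH H)) : Prop :=
  IsBoundary X I ∧ ∀ J : Submodule ℂ (BH H), IsBoundary X J → I ≤ J → J = I

/-- Complete contractivity for a linear self-map of the quotient operator space `B(H)/I`
(expressed via arbitrary representatives, as `qnorm` only depends on the classes). -/
def CCQuotEndo (I : Submodule ℂ (BH H)) (φ : (BH H ⧸ I) →ₗ[ℂ] BH H ⧸ I) : Prop :=
  ∀ (n : ℕ) (A B : Matrix (Fin n) (Fin n) (BH H)),
    (∀ i j, φ (I.mkQ (A i j)) = I.mkQ (B i j)) →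
      qnorm (I : Set (BH H)) B ≤ qnorm (I : Set (BH H)) A

/-- Complete contractivity for a linear map from a subspace `Z ⊆ B(K)` into the
quotient operator space `B(H)/I`. -/
def CCToQuot (Z : Submodule ℂ (BH K)) (I : Submodule ℂ (BH H))
    (φ : Z →ₗ[ℂ] BH H ⧸ I) : Prop :=
  ∀ (n : ℕ) (A : Matrix (Fin n) (Fin n) Z) (B : Matrix (Fin n) (Fin n) (BH H)),
    (∀ i j, I.mkQ (B i j) = φ (A i j)) →
      qnorm (I : Set (BH H)) B ≤ matNorm (A.map fun z => (z : BH K))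

/-- Injectivity of a (unital) operator space `S ⊆ B(H)` in the category of operator
spaces with unital completely contractive maps. -/
def Injective (S : Submodule ℂ (BH H)) : Prop :=
  ∀ (K : Type) [NormedAddCommGroup K] [InnerProductSpace ℂ K] [CompleteSpace K],
    ∀ (Z Y : Submodule ℂ (BH K)) (hZY : Z ≤ Y) (h1Z : (1 : BH K) ∈ Z)
      (φ : Z →ₗ[ℂ] BH H), (∀ z, φ z ∈ S) → CCmap Z φ → φ ⟨1, h1Z⟩ = 1 →
      ∃ ψ : Y →ₗ[ℂ] BH H, (∀ y, ψ y ∈ S) ∧ CCmap Y ψ ∧ ψ ⟨1, hZY h1Z⟩ = 1 ∧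
        ∀ z : Z, ψ (Submodule.inclusion hZY z) = φ z

/-- `(S, ι)` is an injective envelope of the unital operator space `X`:
a unital completely isometric extension which is injective and rigid. -/
structure IsInjEnvelope (X : Submodule ℂ (BH H)) (S : Submodule ℂ (BH K))
    (ι : X →ₗ[ℂ] BH K) : Prop where
  mem : ∀ x, ι x ∈ S
  one : (1 : BH K) ∈ S
  unital : ∀ h1 : (1 : BH H) ∈ X, ι ⟨1, h1⟩ = 1
  ci : CImap X ι
  inj : Injective S
  rigid : ∀ φ : S →ₗ[ℂ] BH K, (∀ s, φ s ∈ S) → CCmap S φ →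
    (∀ x : X, φ ⟨ι x, mem x⟩ = ι x) → ∀ s : S, φ s = (s : BH K)

/-- A (closed, two-sided) ideal of the C*-subalgebra `C ⊆ B(K)`, described as a subset. -/
def IsIdealSet (C : StarSubalgebra ℂ (BH K)) (J : Set (BH K)) : Prop :=
  J ⊆ (C : Set (BH K)) ∧ (0 : BH K) ∈ J ∧
    (∀ a ∈ J, ∀ b ∈ J, a + b ∈ J) ∧ (∀ (c : ℂ), ∀ a ∈ J, c • a ∈ J) ∧
    (∀ c ∈ C, ∀ a ∈ J, c * a ∈ J ∧ a * c ∈ J) ∧ IsClosed J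

/-- A boundary ideal for `X` (embedded via `j`) in the C*-cover `C`. -/
def IsBdryIdeal (X : Submodule ℂ (BH H)) (j : X →ₗ[ℂ] BH K)
    (C : StarSubalgebra ℂ (BH K)) (J : Set (BH K)) : Prop :=
  IsIdealSet C J ∧ IsBoundarySet X j J

/-- `(C, j)` is a C*-cover of the unital operator space `X`. -/
structure IsCstarCover (X : Submodule ℂ (BH H)) (C : StarSubalgebra ℂ (BH K))
    (j : X →ₗ[ℂ] BH K) : Prop where
  mem : ∀ x, j x ∈ C
  unital : ∀ h1 : (1 : BH H) ∈ X, j ⟨1, h1⟩ = 1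
  ci : CImap X j
  gen : C = (StarAlgebra.adjoin ℂ (Set.range fun x : X => j x)).topologicalClosure

end Defs
section AuxChoiEffros
set_option linter.unusedVariables false
set_option linter.unusedSectionVars false

variable {H : Type} [NormedAddCommGroup H] [InnerProductSpace ℂ H] [CompleteSpace H]

lemma amp_apply {n : ℕ} (A : Matrix (Fin n) (Fin n) (BH H)) (x : PiLp 2 fun _ : Fin n => H)
    (k : Fin n) : amp A x k = ∑ j, A k j (x j) := by
  simp only [amp, ContinuousLinearMap.sum_apply, ContinuousLinearMap.comp_apply,
    ContinuousLinearEquiv.coe_coe, PiLp.continuousLinearEquiv_symm_apply,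
    PiLp.continuousLinearEquiv_apply, ContinuousLinearMap.proj_apply,
    ContinuousLinearMap.pi_apply]
  have h : ∀ (f : Fin n → PiLp 2 fun _ : Fin n => H), (∑ i, f i) k = ∑ i, f i k := by
    intro f; simp [WithLp.ofLp_sum]
  simp only [h, PiLp.coe_symm_continuousLinearEquiv, PiLp.coe_continuousLinearEquiv, PiLp.toLp_apply, ContinuousLinearMap.pi_apply,
    Pi.single_apply]
  rw [Finset.sum_comm]
  refine Finset.sum_congr rfl fun j _ => ?_
  rw [Finset.sum_congr rfl (fun i _ => apply_ite (fun f : H →L[ℂ] H => f ((A i j) (x j))) (k = i) _ _)]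
  simp

lemma inner_amp_one (A : Matrix (Fin 1) (Fin 1) (BH H)) (w : PiLp 2 fun _ : Fin 1 => H) :
    (inner ℂ w (amp A w) : ℂ) = inner ℂ (w 0) (A 0 0 (w 0)) := by
  simp [PiLp.inner_apply, amp_apply]

lemma inner_amp_two (A : Matrix (Fin 2) (Fin 2) (BH H)) (w : PiLp 2 fun _ : Fin 2 => H) :
    (inner ℂ w (amp A w) : ℂ) =
      inner ℂ (w 0) (A 0 0 (w 0)) + inner ℂ (w 0) (A 0 1 (w 1)) +
      inner ℂ (w 1) (A 1 0 (w 0)) + inner ℂ (w 1) (A 1 1 (w 1)) := by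
  simp [PiLp.inner_apply, amp_apply, Fin.sum_univ_two, inner_add_right]
  ring

/-- build a PiLp vector over Fin 2 -/
def vec2 (u v : H) : PiLp 2 fun _ : Fin 2 => H := (WithLp.equiv 2 _).symm ![u, v]

@[simp] lemma vec2_zero (u v : H) : vec2 u v 0 = u := rfl
@[simp] lemma vec2_one (u v : H) : vec2 u v 1 = v := rfl
lemma im_inner_eq {T : BH H} (v : H) :
    (inner ℂ v (T v) : ℂ).im = - (inner ℂ (T v) v : ℂ).im := by
  rw [show (inner ℂ v (T v) : ℂ) = starRingEnd ℂ (inner ℂ (T v) v) from (inner_conj_symm _ _).symm]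
  exact Complex.conj_im _

lemma IsPosOp.selfAdjoint {T : BH H} (hT : IsPosOp T) : IsSelfAdjoint T := by
  rw [ContinuousLinearMap.isSelfAdjoint_iff_isSymmetric]
  rw [show (T : H →ₗ[ℂ] H).IsSymmetric ↔ _ from LinearMap.isSymmetric_iff_inner_map_self_real _]
  intro x
  rw [Complex.conj_eq_iff_im]
  have h := hT x
  rw [Complex.nonneg_iff] at h
  have h2 := im_inner_eq (T := T) x
  simp only [ContinuousLinearMap.coe_coe]
  rw [← h.2] at h2
  linarith [h2]

lemma inner_self_real (T : BH H) (hT : IsSelfAdjoint T) (v : H) :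
    (inner ℂ v (T v) : ℂ).im = 0 := by
  have hsym : (T : H →ₗ[ℂ] H).IsSymmetric :=
    ContinuousLinearMap.isSelfAdjoint_iff_isSymmetric.mp hT
  have := (LinearMap.isSymmetric_iff_inner_map_self_real _).mp hsym v
  rw [Complex.conj_eq_iff_im] at this
  simp only [ContinuousLinearMap.coe_coe] at this
  rw [im_inner_eq, this, neg_zero]

lemma selfadjoint_shift {b : BH H} (hb : IsSelfAdjoint b) :
    IsPosOp (b + (‖b‖ : ℂ) • 1) ∧ IsPosOp ((‖b‖ : ℂ) • 1 - b) := by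
  have hreal := inner_self_real b hb
  have hbound : ∀ v : H, |(inner ℂ v (b v) : ℂ).re| ≤ ‖b‖ * ‖v‖ ^ 2 := by
    intro v
    calc |(inner ℂ v (b v) : ℂ).re| ≤ ‖(inner ℂ v (b v) : ℂ)‖ := Complex.abs_re_le_norm _
      _ ≤ ‖v‖ * ‖b v‖ := norm_inner_le_norm _ _
      _ ≤ ‖v‖ * (‖b‖ * ‖v‖) := by gcongr; exact b.le_opNorm v
      _ = ‖b‖ * ‖v‖ ^ 2 := by ring
  constructor <;> intro v <;>
    simp only [ContinuousLinearMap.add_apply, ContinuousLinearMap.sub_apply,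
      ContinuousLinearMap.smul_apply, ContinuousLinearMap.one_apply, inner_add_right,
      inner_sub_right, inner_smul_right] <;>
    rw [Complex.nonneg_iff] <;>
    rw [inner_self_eq_norm_sq_to_K (𝕜 := ℂ)] <;>
    constructor <;>
    simp [hreal v, ← Complex.ofReal_pow] <;>
    [skip; skip] <;>
    nlinarith [abs_le.mp (hbound v)]
section Phi
variable (φ : BH H →ₗ[ℂ] BH H) (hcp : CPfull φ) (hu : φ 1 = 1)

include hcp in
lemma pos_map {a : BH H} (ha : IsPosOp a) : IsPosOp (φ a) := by
  have h := hcp 1 !![a] ?_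
  · intro v
    have h2 := h ((WithLp.equiv 2 _).symm ![v])
    rw [inner_amp_one] at h2
    simpa [Matrix.map_apply] using h2
  · intro w
    rw [inner_amp_one]
    simpa using ha (w 0)

include hcp hu in
lemma star_map (a : BH H) : φ (star a) = star (φ a) := by
  have hsa : ∀ b : BH H, IsSelfAdjoint b → IsSelfAdjoint (φ b) := by
    intro b hb
    have h1 := (selfadjoint_shift hb).1
    have h2 := pos_map φ hcp h1
    have h3 : φ (b + (‖b‖ : ℂ) • 1) = φ b + (‖b‖ : ℂ) • 1 := by
      rw [map_add, map_smul, hu]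
    rw [h3] at h2
    have h4 := h2.selfAdjoint
    have h5 : IsSelfAdjoint ((‖b‖ : ℂ) • (1 : BH H)) := by
      rw [IsSelfAdjoint, star_smul, star_one, Complex.star_def, Complex.conj_ofReal]
    simpa [IsSelfAdjoint, star_add, h5.star_eq] using h4
  set p : BH H := (2 : ℂ)⁻¹ • (a + star a) with hp
  set q : BH H := ((2 : ℂ)⁻¹ * (-Complex.I)) • (a - star a) with hq
  have hI : Complex.I * ((2 : ℂ)⁻¹ * -Complex.I) = (2 : ℂ)⁻¹ := by
    rw [mul_comm ((2:ℂ)⁻¹) (-Complex.I), ← mul_assoc, mul_neg, Complex.I_mul_I]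
    ring
  have hps : IsSelfAdjoint p := by
    rw [IsSelfAdjoint, hp, star_smul, star_add, star_star,
      show star ((2 : ℂ)⁻¹) = (2 : ℂ)⁻¹ by simp [Complex.star_def]]
    module
  have hqs : IsSelfAdjoint q := by
    rw [IsSelfAdjoint, hq, star_smul, star_sub, star_star,
      show star ((2 : ℂ)⁻¹ * -Complex.I) = (2 : ℂ)⁻¹ * Complex.I by
        simp [Complex.star_def]]
    module
  have ha' : a = p + Complex.I • q := by
    rw [hp, hq, smul_smul, hI]; module
  have hstar : star a = p - Complex.I • q := by
    rw [hp, hq, smul_smul, hI]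
    module
  calc φ (star a) = φ p - Complex.I • φ q := by
        rw [hstar]; simp only [map_sub, map_smul]
    _ = star (φ p + Complex.I • φ q) := by
        rw [star_add, star_smul, (hsa p hps).star_eq, (hsa q hqs).star_eq,
          Complex.star_def, Complex.conj_I, neg_smul, ← sub_eq_add_neg]
    _ = star (φ a) := by rw [← map_smul, ← map_add, ← ha']
end Phi
lemma inner_im_swap (x y : H) : (inner ℂ x y : ℂ).im = -(inner ℂ y x : ℂ).im := by
  rw [show (inner ℂ x y : ℂ) = starRingEnd ℂ (inner ℂ y x) from (inner_conj_symm _ _).symm]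
  exact Complex.conj_im _

lemma re_inner_self (x : H) : (inner ℂ x x : ℂ).re = ‖x‖ ^ 2 :=
  inner_self_eq_norm_sq (𝕜 := ℂ) x

lemma im_inner_self (x : H) : (inner ℂ x x : ℂ).im = 0 :=
  inner_self_im (𝕜 := ℂ) x

section Phi2
variable (φ : BH H →ₗ[ℂ] BH H) (hcp : CPfull φ) (hu : φ 1 = 1)

include hcp hu in
lemma contr_map (a : BH H) : ‖φ a‖ ≤ ‖a‖ := by
  suffices hmain : ∀ c : BH H, ‖c‖ ≤ 1 → ‖φ c‖ ≤ 1 by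
    rcases eq_or_ne a 0 with rfl | hne
    · simp
    · have hna : (0:ℝ) < ‖a‖ := norm_pos_iff.mpr hne
      set c : BH H := ((‖a‖ : ℂ))⁻¹ • a with hc
      have hnc : ‖c‖ ≤ 1 := by
        rw [hc, norm_smul]
        simp only [norm_inv, Complex.norm_real, Real.norm_eq_abs, abs_of_nonneg hna.le]
        rw [inv_mul_le_iff₀ hna]; simp
      have hac : a = (‖a‖ : ℂ) • c := by
        rw [hc, smul_smul, mul_inv_cancel₀ (by exact_mod_cast hna.ne')]; simp
      calc ‖φ a‖ = ‖a‖ * ‖φ c‖ := by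
            conv_lhs => rw [hac]
            rw [map_smul, norm_smul]
            simp [abs_of_nonneg hna.le]
        _ ≤ ‖a‖ * 1 := by gcongr; exact hmain c hnc
        _ = ‖a‖ := mul_one _
  intro c hc
  have hpos : IsPosOp (amp !![1, c; star c, (1 : BH H)]) := by
    intro w
    rw [inner_amp_two]
    simp only [Matrix.cons_val', Matrix.cons_val_zero, Matrix.cons_val_one, Matrix.head_cons,
      Matrix.empty_val', Matrix.cons_val_fin_one, Matrix.head_fin_const, Matrix.of_apply,
      ContinuousLinearMap.one_apply]
    set u := w 0; set v := w 1
    have hadj : (inner ℂ v ((star c) u) : ℂ) = starRingEnd ℂ (inner ℂ u (c v)) := by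
      rw [ContinuousLinearMap.star_eq_adjoint, ContinuousLinearMap.adjoint_inner_right,
        ← inner_conj_symm]
    rw [hadj, Complex.nonneg_iff]
    have h1 : |(inner ℂ u (c v) : ℂ).re| ≤ ‖u‖ * ‖v‖ := by
      calc |(inner ℂ u (c v) : ℂ).re| ≤ ‖(inner ℂ u (c v) : ℂ)‖ := Complex.abs_re_le_norm _
        _ ≤ ‖u‖ * ‖c v‖ := norm_inner_le_norm _ _
        _ ≤ ‖u‖ * (1 * ‖v‖) := by
            gcongr
            calc ‖c v‖ ≤ ‖c‖ * ‖v‖ := c.le_opNorm v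
              _ ≤ 1 * ‖v‖ := by gcongr
        _ = ‖u‖ * ‖v‖ := by ring
    constructor
    · simp only [Complex.add_re, Complex.conj_re, re_inner_self]
      nlinarith [abs_le.mp h1, sq_nonneg (‖u‖ - ‖v‖)]
    · simp only [Complex.add_im, Complex.conj_im, im_inner_self]
      ring
  have himg := hcp 2 _ hpos
  have hstar := star_map φ hcp hu c
  have key : ∀ v : H, ‖φ c v‖ ≤ ‖v‖ := by
    intro v
    have h2 := himg (vec2 (-(φ c v)) v)
    rw [inner_amp_two] at h2
    simp only [Matrix.map_apply, Matrix.cons_val', Matrix.cons_val_zero, Matrix.cons_val_one,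
      Matrix.head_cons, Matrix.empty_val', Matrix.cons_val_fin_one, Matrix.head_fin_const,
      Matrix.of_apply, vec2_zero, vec2_one, hu, hstar, ContinuousLinearMap.one_apply] at h2
    have hadj : (inner ℂ v ((star (φ c)) (-(φ c v))) : ℂ) = -(inner ℂ (φ c v) (φ c v) : ℂ) := by
      rw [map_neg, inner_neg_right, ContinuousLinearMap.star_eq_adjoint,
        ContinuousLinearMap.adjoint_inner_right]
    rw [hadj] at h2
    simp only [inner_neg_left, inner_neg_right, neg_neg] at h2
    rw [Complex.nonneg_iff] at h2
    have h4 := h2.1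
    simp only [Complex.add_re, Complex.neg_re, re_inner_self] at h4
    have h3 : ‖φ c v‖ ^ 2 ≤ ‖v‖ ^ 2 := by nlinarith
    exact (pow_le_pow_iff_left₀ (norm_nonneg _) (norm_nonneg _) two_ne_zero).mp h3
  exact (φ c).opNorm_le_bound zero_le_one (fun v => by simpa using key v)
end Phi2
section Phi3
variable (φ : BH H →ₗ[ℂ] BH H) (hcp : CPfull φ) (hu : φ 1 = 1)

include hcp hu in
lemma schwarz_map (s : BH H) (hs : φ s = s) : ‖s‖ ^ 2 ≤ ‖φ (star s * s)‖ := by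
  have hstar : φ (star s) = star s := by rw [star_map φ hcp hu, hs]
  have hpos : IsPosOp (amp !![1, s; star s, star s * s]) := by
    intro w
    rw [inner_amp_two]
    simp only [Matrix.cons_val', Matrix.cons_val_zero, Matrix.cons_val_one, Matrix.head_cons,
      Matrix.empty_val', Matrix.cons_val_fin_one, Matrix.head_fin_const, Matrix.of_apply,
      ContinuousLinearMap.one_apply]
    set u := w 0; set v := w 1
    have h1 : (inner ℂ v ((star s) u) : ℂ) = inner ℂ (s v) u := by
      rw [ContinuousLinearMap.star_eq_adjoint, ContinuousLinearMap.adjoint_inner_right]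
    have h2 : (inner ℂ v ((star s * s) v) : ℂ) = inner ℂ (s v) (s v) := by
      rw [ContinuousLinearMap.mul_apply, ContinuousLinearMap.star_eq_adjoint,
        ContinuousLinearMap.adjoint_inner_right]
    rw [h1, h2]
    have : (inner ℂ u u : ℂ) + inner ℂ u (s v) + inner ℂ (s v) u + inner ℂ (s v) (s v)
        = inner ℂ (u + s v) (u + s v) := (inner_add_add_self _ _).symm
    rw [this, Complex.nonneg_iff]
    exact ⟨by rw [re_inner_self]; positivity, (im_inner_self _).symm⟩
  have himg := hcp 2 _ hpos
  have key : ∀ v : H, ‖s v‖ ^ 2 ≤ ‖φ (star s * s)‖ * ‖v‖ ^ 2 := by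
    intro v
    have h2 := himg (vec2 (-(s v)) v)
    rw [inner_amp_two] at h2
    simp only [Matrix.map_apply, Matrix.cons_val', Matrix.cons_val_zero, Matrix.cons_val_one,
      Matrix.head_cons, Matrix.empty_val', Matrix.cons_val_fin_one, Matrix.head_fin_const,
      Matrix.of_apply, vec2_zero, vec2_one, hu, hs, hstar, ContinuousLinearMap.one_apply] at h2
    have hadj : (inner ℂ v ((star s) (-(s v))) : ℂ) = -(inner ℂ (s v) (s v) : ℂ) := by
      rw [map_neg, inner_neg_right, ContinuousLinearMap.star_eq_adjoint,
        ContinuousLinearMap.adjoint_inner_right]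
    rw [hadj] at h2
    simp only [inner_neg_left, inner_neg_right, neg_neg] at h2
    rw [Complex.nonneg_iff] at h2
    have h4 := h2.1
    simp only [Complex.add_re, Complex.neg_re, re_inner_self] at h4
    have h5 : (inner ℂ v (φ (star s * s) v) : ℂ).re ≤ ‖φ (star s * s)‖ * ‖v‖ ^ 2 := by
      calc (inner ℂ v (φ (star s * s) v) : ℂ).re ≤ ‖(inner ℂ v (φ (star s * s) v) : ℂ)‖ :=
            Complex.re_le_norm _
        _ ≤ ‖v‖ * ‖φ (star s * s) v‖ := norm_inner_le_norm _ _
        _ ≤ ‖v‖ * (‖φ (star s * s)‖ * ‖v‖) := by gcongr; exact (φ (star s * s)).le_opNorm v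
        _ = ‖φ (star s * s)‖ * ‖v‖ ^ 2 := by ring
    nlinarith
  have hb : ‖s‖ ≤ Real.sqrt ‖φ (star s * s)‖ := by
    refine s.opNorm_le_bound (Real.sqrt_nonneg _) fun v => ?_
    have := key v
    have h6 : ‖s v‖ ^ 2 ≤ (Real.sqrt ‖φ (star s * s)‖ * ‖v‖) ^ 2 := by
      rw [mul_pow, Real.sq_sqrt (norm_nonneg _)]
      exact this
    exact (pow_le_pow_iff_left₀ (norm_nonneg _) (by positivity) two_ne_zero).mp h6
  calc ‖s‖ ^ 2 ≤ Real.sqrt ‖φ (star s * s)‖ ^ 2 := by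
        exact pow_le_pow_left₀ (norm_nonneg _) hb 2
    _ = ‖φ (star s * s)‖ := Real.sq_sqrt (norm_nonneg _)

include hcp hu in
lemma qnorm1_eq (hproj : ∀ a, φ (φ a) = φ a) (a : BH H) :
    qnorm1 ((LinearMap.ker φ : Submodule ℂ (BH H)) : Set (BH H)) a = ‖φ a‖ := by
  haveI : Nonempty ((LinearMap.ker φ : Submodule ℂ (BH H)) : Set (BH H)) :=
    ⟨⟨0, by simp [LinearMap.mem_ker]⟩⟩
  refine le_antisymm ?_ ?_
  · have hbdd : BddBelow (Set.range fun b : ((LinearMap.ker φ : Submodule ℂ (BH H)) : Set (BH H))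
        => ‖a + (b : BH H)‖) := ⟨0, by rintro x ⟨b, rfl⟩; positivity⟩
    have hmem : φ a - a ∈ ((LinearMap.ker φ : Submodule ℂ (BH H)) : Set (BH H)) := by
      simp [LinearMap.mem_ker, map_sub, hproj]
    have := ciInf_le hbdd (⟨φ a - a, hmem⟩ :
      ((LinearMap.ker φ : Submodule ℂ (BH H)) : Set (BH H)))
    simpa [qnorm1] using this
  · refine le_ciInf fun b => ?_
    have hb : φ (b : BH H) = 0 := b.2
    have : φ (a + (b : BH H)) = φ a := by rw [map_add, hb, add_zero]
    calc ‖φ a‖ = ‖φ (a + (b : BH H))‖ := by rw [this]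
      _ ≤ ‖a + (b : BH H)‖ := contr_map φ hcp hu _
end Phi3
end AuxChoiEffros

/-- for a ucp projection `φ` of `B(H)` onto an injective envelope
`S ⊆ B(H)` of `X` fixing `X`, the product `(a + ker φ) ⊙ (b + ker φ) := φ(a)φ(b) + ker φ`
on `B(H)/ker φ` is well defined and the quotient norm satisfies the C*-identity. -/
theorem choi_effros_product {H : Type} [NormedAddCommGroup H] [InnerProductSpace ℂ H]
    [CompleteSpace H] (X S : Submodule ℂ (BH H)) (h1X : (1 : BH H) ∈ X) (hXS : X ≤ S)
    (env : IsInjEnvelope X S X.subtype)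
    (φ : BH H →ₗ[ℂ] BH H) (hcp : CPfull φ) (hu : φ 1 = 1)
    (hproj : ∀ a, φ (φ a) = φ a) (hrange : ∀ a, φ a ∈ S) (hfixS : ∀ s ∈ S, φ s = s)
    (hfixX : ∀ x ∈ X, φ x = x) :
    (∀ a b a' b' : BH H,
      (LinearMap.ker φ).mkQ a = (LinearMap.ker φ).mkQ a' →
      (LinearMap.ker φ).mkQ b = (LinearMap.ker φ).mkQ b' →
      (LinearMap.ker φ).mkQ (φ a * φ b) = (LinearMap.ker φ).mkQ (φ a' * φ b')) ∧
    (∀ a : BH H,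
      qnorm1 ((LinearMap.ker φ : Submodule ℂ (BH H)) : Set (BH H)) (star (φ a) * φ a) =
        (qnorm1 ((LinearMap.ker φ : Submodule ℂ (BH H)) : Set (BH H)) a) ^ 2) := by
  refine ⟨?_, ?_⟩
  · intro a b a' b' ha hb
    rw [Submodule.mkQ_apply, Submodule.mkQ_apply, Submodule.Quotient.eq] at ha hb
    rw [LinearMap.mem_ker, map_sub, sub_eq_zero] at ha hb
    rw [ha, hb]
  · intro a
    have hs : φ (φ a) = φ a := hproj a
    rw [qnorm1_eq φ hcp hu hproj, qnorm1_eq φ hcp hu hproj]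
    have upper : ‖φ (star (φ a) * φ a)‖ ≤ ‖φ a‖ ^ 2 := by
      calc ‖φ (star (φ a) * φ a)‖ ≤ ‖star (φ a) * φ a‖ := contr_map φ hcp hu _
        _ = ‖φ a‖ * ‖φ a‖ := CStarRing.norm_star_mul_self
        _ = ‖φ a‖ ^ 2 := (sq ‖φ a‖).symm
    have lower : ‖φ a‖ ^ 2 ≤ ‖φ (star (φ a) * φ a)‖ := schwarz_map φ hcp hu (φ a) hs
    exact le_antisymm upper lower
end
end

section
/- Let X ⊆ B(H) be a unital operator space, S ⊆ B(H) an injective envelope of X containing X with inclusion as the embedding, and φ: B(H) → S an X-projection onto S. If ψ: B(H) → B(H) is an X-map with ‖ψ_ν([a_{ij}])‖ ≤ ‖φ_ν([a_{ij}])‖ for all ν and all [a_{ij}] ∈ M_ν(B(H)), then ‖ψ_ν([a_{ij}])‖ = ‖φ_ν([a_{ij}])‖ for all ν and all [a_{ij}]; that is, the X-seminorm p_φ(a) = ‖φ(a)‖ is minimal in the complete order ≤_c among X-seminorms. -/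
set_option synthInstance.maxHeartbeats 1000000
set_option maxHeartbeats 1000000

noncomputable section

open scoped ComplexOrder

section Aux
variable {H : Type} [NormedAddCommGroup H] [InnerProductSpace ℂ H] [CompleteSpace H]

lemma pil1_norm (v : PiLp 2 fun _ : Fin 1 => H) : ‖v‖ = ‖v 0‖ := by
  rw [PiLp.norm_eq_sum (by norm_num)]
  simp [Fin.sum_univ_one]
  rw [← Real.rpow_natCast ‖v 0‖ 2, ← Real.rpow_mul (norm_nonneg _)]
  norm_num

lemma amp_one_apply0 (A : Matrix (Fin 1) (Fin 1) (BH H)) (v : PiLp 2 fun _ : Fin 1 => H) :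
    amp A v 0 = A 0 0 (v 0) := by
  simp [amp, Fin.sum_univ_one, ContinuousLinearMap.pi_apply, Pi.single_apply]

lemma matNorm_one (A : Matrix (Fin 1) (Fin 1) (BH H)) : matNorm A = ‖A 0 0‖ := by
  unfold matNorm
  apply le_antisymm
  · refine ContinuousLinearMap.opNorm_le_bound _ (norm_nonneg _) fun v => ?_
    rw [pil1_norm, amp_one_apply0]
    calc ‖A 0 0 (v 0)‖ ≤ ‖A 0 0‖ * ‖v 0‖ := (A 0 0).le_opNorm _
      _ = ‖A 0 0‖ * ‖v‖ := by rw [pil1_norm v]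
  · refine ContinuousLinearMap.opNorm_le_bound (A 0 0) (norm_nonneg (amp A)) fun w => ?_
    let v' : PiLp 2 fun _ : Fin 1 => H := WithLp.toLp 2 (fun _ => w)
    have h1 : A 0 0 w = amp A v' 0 := (amp_one_apply0 A v').symm
    have h2 : ‖v'‖ = ‖w‖ := pil1_norm v'
    rw [h1, ← pil1_norm, ← h2]
    exact (amp A).le_opNorm v' 

end Aux

/-- if `φ` is an `X`-projection of `B(H)` onto an injective envelope `S` of
`X` and `ψ` is an `X`-map whose matrix seminorms are dominated by those of `φ`, then they
agree at all matrix levels: `p_φ` is a `≤_c`-minimal `X`-seminorm. -/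
theorem Xseminorm_minimal {H : Type} [NormedAddCommGroup H] [InnerProductSpace ℂ H]
    [CompleteSpace H] (X S : Submodule ℂ (BH H)) (h1X : (1 : BH H) ∈ X) (hXS : X ≤ S)
    (env : IsInjEnvelope X S X.subtype)
    (φ : BH H →ₗ[ℂ] BH H) (hφcc : CCfull φ) (hφ1 : φ 1 = 1) (hφX : ∀ x ∈ X, φ x = x)
    (hφproj : ∀ a, φ (φ a) = φ a) (hφS : ∀ a, φ a ∈ S) (hφfix : ∀ s ∈ S, φ s = s)
    (ψ : BH H →ₗ[ℂ] BH H) (hψcc : CCfull ψ) (hψ1 : ψ 1 = 1) (hψX : ∀ x ∈ X, ψ x = x)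
    (hdom : ∀ (n : ℕ) (A : Matrix (Fin n) (Fin n) (BH H)),
      matNorm (A.map fun a => ψ a) ≤ matNorm (A.map fun a => φ a)) :
    ∀ (n : ℕ) (A : Matrix (Fin n) (Fin n) (BH H)),
      matNorm (A.map fun a => ψ a) = matNorm (A.map fun a => φ a) := by
  -- Step A: ψ ∘ φ = ψ, since ker φ ⊆ ker ψ (from `hdom` at level 1)
  have kerle : ∀ a : BH H, φ a = 0 → ψ a = 0 := by
    intro a ha
    have h := hdom 1 (Matrix.of fun _ _ : Fin 1 => a)
    rw [matNorm_one, matNorm_one] at h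
    simp only [Matrix.map_apply, Matrix.of_apply] at h
    rw [ha] at h
    simpa using norm_le_zero_iff.mp (by simpa using h)
  have hpsiphi : ∀ a : BH H, ψ (φ a) = ψ a := by
    intro a
    have h0 : φ (φ a - a) = 0 := by rw [map_sub, hφproj]; abel
    have := kerle _ h0
    rw [map_sub, sub_eq_zero] at this
    exact this
  -- Step B: rigidity gives φ (ψ s) = s for s ∈ S
  have hfix : ∀ s : S, φ (ψ (s : BH H)) = (s : BH H) := by
    have hmem : ∀ s : S, (φ.comp (ψ.comp S.subtype)) s ∈ S := fun s => hφS _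
    have hcc : CCmap S (φ.comp (ψ.comp S.subtype)) := by
      intro n A
      have e1 : (A.map fun s => (φ.comp (ψ.comp S.subtype)) s)
          = ((A.map fun s => ψ (s : BH H)).map fun a => φ a) := by
        ext i j; simp [Matrix.map_apply]
      have e2 : (A.map fun s => ψ (s : BH H))
          = ((A.map fun s => (s : BH H)).map fun a => ψ a) := by
        ext i j; simp [Matrix.map_apply]
      calc matNorm (A.map fun s => (φ.comp (ψ.comp S.subtype)) s)
          = matNorm ((A.map fun s => ψ (s : BH H)).map fun a => φ a) := by rw [e1]
        _ ≤ matNorm (A.map fun s => ψ (s : BH H)) := hφcc n _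
        _ = matNorm ((A.map fun s => (s : BH H)).map fun a => ψ a) := by rw [e2]
        _ ≤ matNorm (A.map fun s => (s : BH H)) := hψcc n _
    have hXfix : ∀ x : X, (φ.comp (ψ.comp S.subtype)) ⟨X.subtype x, env.mem x⟩
        = X.subtype x := by
      intro x
      simp only [LinearMap.comp_apply, Submodule.subtype_apply]
      rw [hψX _ x.2, hφX _ x.2]
    intro s
    exact env.rigid (φ.comp (ψ.comp S.subtype)) hmem hcc hXfix s
  -- Step C: conclude equality of matrix seminorms
  intro n A
  refine le_antisymm (hdom n A) ?_
  have e1 : (A.map fun a => φ a)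
      = ((A.map fun a => ψ (φ a)).map fun a => φ a) := by
    refine Matrix.ext fun i j => ?_
    simp only [Matrix.map_apply]
    exact (hfix ⟨φ (A i j), hφS _⟩).symm
  have e2 : (A.map fun a => ψ (φ a)) = (A.map fun a => ψ a) := by
    refine Matrix.ext fun i j => ?_
    simp only [Matrix.map_apply]
    exact hpsiphi _
  calc matNorm (A.map fun a => φ a)
      = matNorm ((A.map fun a => ψ (φ a)).map fun a => φ a) := by rw [e1]
    _ ≤ matNorm (A.map fun a => ψ (φ a)) := hφcc n _
    _ = matNorm (A.map fun a => ψ a) := by rw [e2]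
end
end
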